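/- For every positive integer r, the generating function for r-kernels with the exponent of z tracking the largest part satisfies: Σ_{λ an r-kernel} z^{λ_1} T^{|λ|} = (z^r T^r; T^r)_∞ / (zT; T)_∞, as an identity of formal power series. -/

import Mathlib

open MvPowerSeries

/-- `f` encodes a partition: weakly decreasing with finitely many nonzero parts.
`f i` is the `(i+1)`-st part `λ_{i+1}`. -/
def PartitionFun (f : ℕ → ℕ) : Prop :=
  (∀ i, f (i + 1) ≤ f i) ∧ ∃ N, ∀ i, N ≤ i → f i = 0

/-- The size `|λ|` of a partition. -/
noncomputable def psize (f : ℕ → ℕ) : ℕ := ∑ᶠ i, f i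

/-- `conj f j` is the number of parts of `f` that are `> j`, i.e. the conjugate part `λ'_{j+1}`. -/
noncomputable def conj (f : ℕ → ℕ) (j : ℕ) : ℕ := {i | j < f i}.ncard

/-- The hook length of the cell in row `i+1`, column `j+1`:
`h = λ_{i+1} + λ'_{j+1} - (i+1) - (j+1) + 1`. -/
noncomputable def hookLen (f : ℕ → ℕ) (i j : ℕ) : ℕ := f i + conj f j - i - j - 1

/-- The cell `(i+1, j+1)` is a bottom square: it lies in the diagram and has leg length 0,
i.e. `λ'_{j+1} = i + 1`. -/
noncomputable def bottomCell (f : ℕ → ℕ) (i j : ℕ) : Prop := j < f i ∧ conj f j = i + 1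

/-- `ν_i = Σ_{j ≥ i} ⌊(λ_j − λ_{j+1})/r⌋` (0-based indexing). -/
noncomputable def nuF (r : ℕ) (f : ℕ → ℕ) : ℕ → ℕ :=
  fun i => ∑ᶠ j, if i ≤ j then (f j - f (j + 1)) / r else 0

/-- `μ_i = λ_i − r·ν_i`. -/
noncomputable def muF (r : ℕ) (f : ℕ → ℕ) : ℕ → ℕ :=
  fun i => f i - r * nuF r f i

/-- An `r`-kernel: all successive part differences are `< r`. -/
def KernelFun (r : ℕ) (f : ℕ → ℕ) : Prop := ∀ i, f i - f (i + 1) < r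

/-- An `r`-core: no hook length is divisible by `r`. -/
noncomputable def RCoreFun (r : ℕ) (f : ℕ → ℕ) : Prop :=
  ∀ i j, j < f i → ¬ r ∣ hookLen f i j

/-- `f` and `g` have the same `r`-core, expressed via the abacus/β-number characterisation:
for some `N` beyond the lengths of both partitions, the multisets of residues mod `r` of the
β-numbers `{λ_i + N − i : 1 ≤ i ≤ N}` of the two partitions coincide. -/
def SameRCore (r : ℕ) (f g : ℕ → ℕ) : Prop :=
  ∃ N, (∀ i, N ≤ i → f i = 0) ∧ (∀ i, N ≤ i → g i = 0) ∧
    ∀ c, ((Finset.range N).filter fun i => (f i + N - i - 1) % r = c).card =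
         ((Finset.range N).filter fun i => (g i + N - i - 1) % r = c).card

/-- `|H_r(λ)|`: the number of cells of `λ` whose hook length is divisible by `r`. -/
noncomputable def hrCard (r : ℕ) (f : ℕ → ℕ) : ℕ :=
  {p : ℕ × ℕ | p.2 < f p.1 ∧ r ∣ hookLen f p.1 p.2}.ncard

/-- `|H^{(b)}_r(λ)|`: the number of bottom squares of `λ` whose hook length is divisible
by `r`. -/
noncomputable def botHrCard (r : ℕ) (f : ℕ → ℕ) : ℕ :=
  {p : ℕ × ℕ | bottomCell f p.1 p.2 ∧ r ∣ hookLen f p.1 p.2}.ncard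

/-- The `(σ→₀ℕ)→ℚ` product topology on multivariate formal power series, so that the
infinite sums and products below are the (coefficientwise convergent) formal ones. -/
noncomputable instance mvTop (σ : Type*) : TopologicalSpace (MvPowerSeries σ ℚ) :=
  (inferInstance : TopologicalSpace ((σ →₀ ℕ) → ℚ))

/-- `(a;q)_∞ = Π_{j≥0} (1 - a q^j)`. -/
noncomputable def qPochInf {σ : Type*} (a q : MvPowerSeries σ ℚ) : MvPowerSeries σ ℚ :=
  ∏' j : ℕ, (1 - a * q ^ j)


noncomputable section Stmt4AuxSec
namespace Stmt4Aux
open Finset Filter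


abbrev PS := MvPowerSeries (Fin 2) ℚ

/-! ### Instances transferred along the defeq with the Pi type -/

instance : T2Space PS := inferInstanceAs (T2Space ((Fin 2 →₀ ℕ) → ℚ))

/-! ### Basic monomials -/

def uu (j : ℕ) : PS := X 0 * X 1 ^ (j + 1)

def GG (r j : ℕ) : PS := ∑ v ∈ Finset.range r, uu j ^ v
def BB (j : ℕ) : PS := 1 - uu j
def CC (r j : ℕ) : PS := 1 - uu j ^ r

lemma uu_pow (j d : ℕ) :
    uu j ^ d = monomial (Finsupp.single 0 d + Finsupp.single 1 ((j + 1) * d)) 1 := by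
  rw [uu, mul_pow, ← pow_mul, X_pow_eq, X_pow_eq, monomial_mul_monomial, one_mul]

lemma pair_apply₀ (a b : ℕ) :
    ((Finsupp.single (0 : Fin 2) a + Finsupp.single (1 : Fin 2) b : Fin 2 →₀ ℕ)) 0 = a := by
  rw [Finsupp.add_apply, Finsupp.single_eq_same, Finsupp.single_eq_of_ne (by decide), add_zero]

lemma pair_apply₁ (a b : ℕ) :
    ((Finsupp.single (0 : Fin 2) a + Finsupp.single (1 : Fin 2) b : Fin 2 →₀ ℕ)) 1 = b := by
  rw [Finsupp.add_apply, Finsupp.single_eq_same, Finsupp.single_eq_of_ne (by decide), zero_add]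

lemma eq_pair_iff (e : Fin 2 →₀ ℕ) (a b : ℕ) :
    e = Finsupp.single 0 a + Finsupp.single 1 b ↔ e 0 = a ∧ e 1 = b := by
  constructor
  · rintro rfl; exact ⟨pair_apply₀ a b, pair_apply₁ a b⟩
  · rintro ⟨h0, h1⟩
    ext x
    fin_cases x
    · exact h0.trans (pair_apply₀ a b).symm
    · exact h1.trans (pair_apply₁ a b).symm

lemma coeff_uu_pow (e : Fin 2 →₀ ℕ) (j d : ℕ) :
    coeff e (uu j ^ d) = if e 0 = d ∧ e 1 = (j + 1) * d then 1 else 0 := by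
  rw [uu_pow, coeff_monomial]
  exact if_congr (eq_pair_iff e d ((j + 1) * d)) rfl rfl

/-! ### Tame families and formal infinite products -/

def prodLimit (b : ℕ → PS) : PS := fun e => coeff e (∏ j ∈ Finset.range (e 1 + 1), b j)

lemma coeff_prodLimit (b : ℕ → PS) (e : Fin 2 →₀ ℕ) :
    coeff e (prodLimit b) = coeff e (∏ j ∈ Finset.range (e 1 + 1), b j) := rfl

def Tame (b : ℕ → PS) : Prop :=
  ∀ j : ℕ, ∀ e : Fin 2 →₀ ℕ, e 1 ≤ j → coeff e (b j) = coeff e 1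

lemma coeff_mul_tame (F c : PS) (e : Fin 2 →₀ ℕ)
    (h : ∀ e' : Fin 2 →₀ ℕ, e' ≤ e → coeff e' c = coeff e' 1) :
    coeff e (F * c) = coeff e F := by
  classical
  rw [coeff_mul, Finset.sum_eq_single (e, 0)]
  · rw [h 0 (zero_le (a := e)), coeff_one, if_pos rfl, mul_one]
  · rintro ⟨p1, p2⟩ hp hne
    have hmem : p1 + p2 = e := mem_antidiagonal.mp hp
    have h2 : p2 ≤ e := hmem ▸ le_add_self
    rw [h p2 h2, coeff_one]
    rcases eq_or_ne p2 0 with h0 | h0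
    · exfalso; apply hne; subst h0; rw [add_zero] at hmem; rw [hmem]
    · rw [if_neg h0, mul_zero]
  · intro habs
    exact absurd (mem_antidiagonal.mpr (add_zero e)) habs

lemma coeff_prod_subset (b : ℕ → PS) (hb : Tame b) (e : Fin 2 →₀ ℕ) {s : Finset ℕ}
    (hs : Finset.range (e 1 + 1) ⊆ s) :
    coeff e (∏ j ∈ s, b j) = coeff e (∏ j ∈ Finset.range (e 1 + 1), b j) := by
  classical
  set N := e 1 + 1 with hN
  have key : ∀ t : Finset ℕ, (∀ j ∈ t, N ≤ j) →
      coeff e (∏ j ∈ Finset.range N ∪ t, b j) =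
        coeff e (∏ j ∈ Finset.range N, b j) := by
    intro t
    induction t using Finset.induction_on with
    | empty => simp
    | @insert j t hj ih =>
      intro ht
      have hjN : N ≤ j := ht j (Finset.mem_insert_self j t)
      have hnot : j ∉ Finset.range N ∪ t := by
        simp only [Finset.mem_union, Finset.mem_range]
        push_neg
        exact ⟨by omega, hj⟩
      rw [Finset.union_insert, Finset.prod_insert hnot, mul_comm,
        coeff_mul_tame _ _ e (fun e' he' => hb j e' (by
          have := (Finsupp.le_def.mp he') 1
          omega))]
      exact ih (fun k hk => ht k (Finset.mem_insert_of_mem hk))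
  have hsplit : s = Finset.range N ∪ (s \ Finset.range N) :=
    (Finset.union_sdiff_of_subset hs).symm
  rw [hsplit]
  exact key _ (fun j hj => by
    have := Finset.mem_sdiff.mp hj
    have := this.2
    simp only [Finset.mem_range] at this
    omega)

lemma hasProd_tame (b : ℕ → PS) (hb : Tame b) : HasProd b (prodLimit b) := by
  have H : ∀ e : Fin 2 →₀ ℕ,
      Tendsto (fun s : Finset ℕ => coeff e (∏ j ∈ s, b j)) atTop
        (nhds (coeff e (prodLimit b))) := by
    intro e
    apply Tendsto.congr' _ (tendsto_const_nhds (x := coeff e (prodLimit b)))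
    have hev : ∀ᶠ s : Finset ℕ in atTop, Finset.range (e 1 + 1) ⊆ s :=
      eventually_atTop.mpr ⟨Finset.range (e 1 + 1), fun s hs => hs⟩
    filter_upwards [hev] with s hs
    rw [coeff_prod_subset b hb e hs, coeff_prodLimit]
  exact tendsto_pi_nhds.mpr H

lemma tprod_tame (b : ℕ → PS) (hb : Tame b) : ∏' j, b j = prodLimit b :=
  (hasProd_tame b hb).tprod_eq

/-! ### Tameness of the families -/

lemma tame_BB : Tame BB := by
  intro j e he
  rw [BB, map_sub]
  have h0 : coeff e (uu j) = 0 := by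
    rw [← pow_one (uu j), coeff_uu_pow, if_neg]
    rintro ⟨_, h1⟩
    omega
  rw [h0, sub_zero]

lemma tame_CC (r : ℕ) (hr : 0 < r) : Tame (CC r) := by
  intro j e he
  rw [CC, map_sub]
  have h0 : coeff e (uu j ^ r) = 0 := by
    rw [coeff_uu_pow, if_neg]
    rintro ⟨_, h1⟩
    have : j + 1 ≤ (j + 1) * r := Nat.le_mul_of_pos_right _ hr
    omega
  rw [h0, sub_zero]

lemma tame_GG (r : ℕ) (hr : 0 < r) : Tame (GG r) := by
  intro j e he
  rw [GG, map_sum, Finset.sum_eq_single 0]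
  · rw [pow_zero]
  · intro v _ hv0
    rw [coeff_uu_pow, if_neg]
    rintro ⟨_, h1⟩
    have : j + 1 ≤ (j + 1) * v := Nat.le_mul_of_pos_right _ (Nat.pos_of_ne_zero hv0)
    omega
  · intro habs
    exact absurd (Finset.mem_range.mpr hr) habs

lemma GG_mul_BB (r j : ℕ) : GG r j * BB j = CC r j := by
  have h := geom_sum_mul (uu j) r
  rw [GG, BB, CC]
  linear_combination -h


/-! ### The weight of a difference vector -/

def S0 (d : ℕ →₀ ℕ) : ℕ := d.sum fun _ v => v
def S1 (d : ℕ →₀ ℕ) : ℕ := d.sum fun k v => (k + 1) * v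

def wD (d : ℕ →₀ ℕ) : PS :=
  monomial (Finsupp.single 0 (S0 d) + Finsupp.single 1 (S1 d)) 1

lemma wD_eq (d : ℕ →₀ ℕ) : wD d = (X 0 : PS) ^ S0 d * X 1 ^ S1 d := by
  rw [X_pow_eq, X_pow_eq, monomial_mul_monomial, one_mul, wD]

lemma coeff_wD (e : Fin 2 →₀ ℕ) (d : ℕ →₀ ℕ) :
    coeff e (wD d) = if e 0 = S0 d ∧ e 1 = S1 d then 1 else 0 := by
  rw [wD, coeff_monomial]
  exact if_congr (eq_pair_iff e _ _) rfl rfl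

/-! ### Packing a finite tuple into a finsupp -/

def phi (N : ℕ) (p : Fin N → ℕ) : ℕ →₀ ℕ :=
  Finsupp.onFinset (Finset.range N) (fun j => if h : j < N then p ⟨j, h⟩ else 0)
    (fun a ha => Finset.mem_range.mpr (by by_contra h; exact ha (dif_neg h)))

lemma phi_apply (N : ℕ) (p : Fin N → ℕ) (j : ℕ) :
    phi N p j = if h : j < N then p ⟨j, h⟩ else 0 := rfl

lemma phi_apply_lt (N : ℕ) (p : Fin N → ℕ) (i : Fin N) : phi N p i = p i := by
  rw [phi_apply, dif_pos i.isLt]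

lemma phi_injective (N : ℕ) : Function.Injective (phi N) := by
  intro p q h
  funext i
  have := congrArg (fun d : ℕ →₀ ℕ => d i.1) h
  simpa [phi_apply_lt] using this

lemma phi_support (N : ℕ) (p : Fin N → ℕ) : (phi N p).support ⊆ Finset.range N :=
  Finsupp.support_onFinset_subset

lemma S0_phi (N : ℕ) (p : Fin N → ℕ) : S0 (phi N p) = ∑ i : Fin N, p i := by
  rw [S0, Finsupp.sum_of_support_subset _ (phi_support N p) _ (fun _ _ => rfl),
    ← Fin.sum_univ_eq_sum_range (fun j => phi N p j) N]
  exact Finset.sum_congr rfl fun i _ => phi_apply_lt N p i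

lemma S1_phi (N : ℕ) (p : Fin N → ℕ) :
    S1 (phi N p) = ∑ i : Fin N, (i.1 + 1) * p i := by
  rw [S1, Finsupp.sum_of_support_subset _ (phi_support N p) _ (fun _ _ => by simp),
    ← Fin.sum_univ_eq_sum_range (fun j => (j + 1) * phi N p j) N]
  exact Finset.sum_congr rfl fun i _ => by rw [phi_apply_lt]

lemma prod_uu_pow (N : ℕ) (p : Fin N → ℕ) :
    ∏ i : Fin N, uu i ^ p i = wD (phi N p) := by
  rw [wD_eq, S0_phi, S1_phi]
  calc ∏ i : Fin N, uu i ^ p i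
      = ∏ i : Fin N, ((X 0 : PS) ^ p i * X 1 ^ ((i.1 + 1) * p i)) :=
        Finset.prod_congr rfl fun i _ => by rw [uu, mul_pow, ← pow_mul]
    _ = (∏ i : Fin N, (X 0 : PS) ^ p i) * ∏ i : Fin N, (X 1 : PS) ^ ((i.1 + 1) * p i) :=
        Finset.prod_mul_distrib
    _ = (X 0 : PS) ^ (∑ i : Fin N, p i) * X 1 ^ (∑ i : Fin N, (i.1 + 1) * p i) := by
        rw [Finset.prod_pow_eq_pow_sum, Finset.prod_pow_eq_pow_sum]

lemma coeff_prod_GG (r : ℕ) (e : Fin 2 →₀ ℕ) :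
    coeff e (∏ j ∈ Finset.range (e 1 + 1), GG r j) =
      ∑ p ∈ Fintype.piFinset (fun _ : Fin (e 1 + 1) => Finset.range r),
        coeff e (wD (phi (e 1 + 1) p)) := by
  rw [← Fin.prod_univ_eq_prod_range (fun j => GG r j) (e 1 + 1)]
  simp only [GG]
  rw [Finset.prod_univ_sum, map_sum]
  exact Finset.sum_congr rfl fun p _ => by rw [prod_uu_pow]

/-! ### The key HasSum -/

theorem hasSum_wD (r : ℕ) (hr : 0 < r) :
    HasSum (fun d : {d : ℕ →₀ ℕ // ∀ j, d j < r} => wD d.1) (prodLimit (GG r)) := by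
  classical
  have key : HasSum (Set.indicator {d : ℕ →₀ ℕ | ∀ j, d j < r} wD) (prodLimit (GG r)) := by
    have H : ∀ e : Fin 2 →₀ ℕ,
        Tendsto (fun s : Finset (ℕ →₀ ℕ) =>
            coeff e (∑ d ∈ s, Set.indicator {d : ℕ →₀ ℕ | ∀ j, d j < r} wD d)) atTop
          (nhds (coeff e (prodLimit (GG r)))) := by
      intro e
      set N := e 1 + 1 with hN
      set s0 : Finset (ℕ →₀ ℕ) :=
        (Fintype.piFinset (fun _ : Fin N => Finset.range r)).image (phi N) with hs0
      apply Tendsto.congr' _ (tendsto_const_nhds (x := coeff e (prodLimit (GG r))))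
      have hev : ∀ᶠ s : Finset (ℕ →₀ ℕ) in atTop, s0 ⊆ s :=
        eventually_atTop.mpr ⟨s0, fun s hs => hs⟩
      filter_upwards [hev] with s hs
      rw [map_sum]
      rw [← Finset.sum_subset hs (fun d _ hd => ?van)]
      · -- sum over s0 equals the coefficient of the product
        rw [hs0, Finset.sum_image (fun p _ q _ h => phi_injective N h)]
        rw [coeff_prodLimit, coeff_prod_GG]
        apply Finset.sum_congr rfl
        intro p hp
        have hmem' : phi N p ∈ {d : ℕ →₀ ℕ | ∀ j, d j < r} := by
          intro j
          rw [phi_apply]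
          split
          · next h =>
            exact Finset.mem_range.mp ((Fintype.mem_piFinset.mp hp) ⟨j, h⟩)
          · exact hr
        rw [Set.indicator_of_mem hmem' wD]
      case van =>
        -- terms outside s0 vanish
        by_cases hD : d ∈ {d : ℕ →₀ ℕ | ∀ j, d j < r}
        · rw [Set.indicator_of_mem hD, coeff_wD, if_neg]
          rintro ⟨h0, h1⟩
          apply hd
          have hsupp : ∀ j, d j ≠ 0 → j < N := by
            intro j hj
            have hmem : j ∈ d.support := Finsupp.mem_support_iff.mpr hj
            have : (j + 1) * d j ≤ S1 d := by
              rw [S1, Finsupp.sum]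
              exact Finset.single_le_sum (f := fun k => (k + 1) * d k)
                (fun k _ => Nat.zero_le _) hmem
            have h2 : j + 1 ≤ (j + 1) * d j :=
              Nat.le_mul_of_pos_right _ (Nat.pos_of_ne_zero hj)
            omega
          have hdphi : d = phi N (fun i => d i.1) := by
            ext j
            rw [phi_apply]
            split
            · rfl
            · next h =>
              by_contra hne
              exact h (hsupp j hne)
          rw [hs0, Finset.mem_image]
          refine ⟨fun i => d i.1, ?_, hdphi.symm⟩
          exact Fintype.mem_piFinset.mpr fun i => Finset.mem_range.mpr (hD i.1)
        · rw [Set.indicator_of_notMem hD, map_zero]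
    exact tendsto_pi_nhds.mpr H
  exact (hasSum_subtype_iff_indicator).mpr key


/-! ### From difference vectors to partitions -/

def toF (d : ℕ →₀ ℕ) : ℕ → ℕ := fun j => ∑ k ∈ d.support, if j ≤ k then d k else 0

lemma toF_succ (d : ℕ →₀ ℕ) (j : ℕ) : toF d j = d j + toF d (j + 1) := by
  classical
  have hsplit : ∀ k ∈ d.support,
      (if j ≤ k then d k else 0) = (if k = j then d k else 0) + (if j + 1 ≤ k then d k else 0) :=
    fun k _ => by split_ifs <;> omega
  rw [toF, Finset.sum_congr rfl hsplit, Finset.sum_add_distrib,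
    Finset.sum_ite_eq' d.support j (fun k => d k)]
  by_cases hj : j ∈ d.support
  · rw [if_pos hj]; simp [toF]
  · rw [if_neg hj, Finsupp.notMem_support_iff.mp hj]; simp [toF]

lemma toF_eq_zero (d : ℕ →₀ ℕ) {j : ℕ} (h : ∀ k ∈ d.support, k < j) : toF d j = 0 :=
  Finset.sum_eq_zero fun k hk => if_neg (by have := h k hk; omega)

lemma partitionFun_toF (d : ℕ →₀ ℕ) : PartitionFun (toF d) := by
  constructor
  · intro i
    have h := toF_succ d i
    omega
  · refine ⟨d.support.sup id + 1, fun i hi => toF_eq_zero d fun k hk => ?_⟩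
    have : k ≤ d.support.sup id := Finset.le_sup (f := id) hk
    omega

lemma kernelFun_toF (r : ℕ) (d : ℕ →₀ ℕ) (hd : ∀ j, d j < r) : KernelFun r (toF d) := by
  intro i
  have h := toF_succ d i
  have := hd i
  omega

lemma toF_zero_eq (d : ℕ →₀ ℕ) : toF d 0 = S0 d := by
  rw [toF, S0, Finsupp.sum]
  exact Finset.sum_congr rfl fun k _ => if_pos (Nat.zero_le _)

lemma psize_toF (d : ℕ →₀ ℕ) : psize (toF d) = S1 d := by
  classical
  set N := d.support.sup id + 1 with hN
  have hsupp : ∀ k ∈ d.support, k < N := fun k hk => by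
    have : k ≤ d.support.sup id := Finset.le_sup (f := id) hk
    omega
  have h1 : psize (toF d) = ∑ i ∈ Finset.range N, toF d i := by
    rw [psize]
    apply finsum_eq_finset_sum_of_support_subset
    intro i hi
    simp only [Function.mem_support] at hi
    simp only [Finset.coe_range, Set.mem_Iio]
    by_contra hiN
    exact hi (toF_eq_zero d fun k hk => by have := hsupp k hk; omega)
  rw [h1]
  simp only [toF]
  rw [Finset.sum_comm, S1, Finsupp.sum]
  apply Finset.sum_congr rfl
  intro k hk
  have hkN := hsupp k hk
  have hcongr : ∀ i ∈ Finset.range N,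
      (if i ≤ k then d k else 0) = (if i ∈ Finset.range (k + 1) then d k else 0) :=
    fun i _ => if_congr (by rw [Finset.mem_range]; omega) rfl rfl
  rw [Finset.sum_congr rfl hcongr, Finset.sum_ite_mem]
  have hinter : Finset.range N ∩ Finset.range (k + 1) = Finset.range (k + 1) := by
    ext x
    simp only [Finset.mem_inter, Finset.mem_range]
    omega
  rw [hinter, Finset.sum_const, Finset.card_range, smul_eq_mul]

lemma tele (f : ℕ → ℕ) (hanti : Antitone f) :
    ∀ (M : ℕ) {j : ℕ}, j ≤ M →
      (∑ k ∈ Finset.range M, if j ≤ k then f k - f (k + 1) else 0) = f j - f M := by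
  intro M
  induction M with
  | zero =>
    intro j hj
    obtain rfl : j = 0 := Nat.le_zero.mp hj
    simp
  | succ M ih =>
    intro j hj
    rw [Finset.sum_range_succ]
    by_cases hjM : j ≤ M
    · rw [ih hjM, if_pos hjM]
      have h1 : f (M + 1) ≤ f M := hanti (Nat.le_succ M)
      have h2 : f M ≤ f j := hanti hjM
      omega
    · have hjeq : j = M + 1 := by omega
      subst hjeq
      rw [Finset.sum_eq_zero (fun k hk => if_neg (by
        have := Finset.mem_range.mp hk; omega)), if_neg (by omega)]
      omega

/-! ### The equivalence -/

def dOf (f : ℕ → ℕ) (hfin : ∃ N, ∀ i, N ≤ i → f i = 0) : ℕ →₀ ℕ :=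
  Finsupp.ofSupportFinite (fun j => f j - f (j + 1))
    (Set.Finite.subset (Set.finite_Iio (Classical.choose hfin)) (by
      intro j hj
      simp only [Function.mem_support] at hj
      simp only [Set.mem_Iio]
      by_contra h
      push_neg at h
      have hN := Classical.choose_spec hfin
      exact hj (by rw [hN j h, hN (j + 1) (by omega)]; omega)))

lemma dOf_apply (f : ℕ → ℕ) (hfin : ∃ N, ∀ i, N ≤ i → f i = 0) (j : ℕ) :
    dOf f hfin j = f j - f (j + 1) :=
  congrFun Finsupp.ofSupportFinite_coe j

def kerEquiv (r : ℕ) (hr : 0 < r) :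
    {d : ℕ →₀ ℕ // ∀ j, d j < r} ≃ {f : ℕ → ℕ // PartitionFun f ∧ KernelFun r f} where
  toFun d := ⟨toF d.1, partitionFun_toF d.1, kernelFun_toF r d.1 d.2⟩
  invFun f := ⟨dOf f.1 f.2.1.2, fun j => by rw [dOf_apply]; exact f.2.2 j⟩
  left_inv d := by
    apply Subtype.ext
    ext j
    simp only [dOf_apply]
    have := toF_succ d.1 j
    omega
  right_inv f := by
    apply Subtype.ext
    funext j
    obtain ⟨⟨hmono, hfin⟩, hker⟩ := f.2
    obtain ⟨N, hN⟩ := hfin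
    have hanti : Antitone f.1 := antitone_nat_of_succ_le hmono
    show toF (dOf f.1 f.2.1.2) j = f.1 j
    set d : ℕ →₀ ℕ := dOf f.1 f.2.1.2 with hd
    have hcoe : ∀ i, d i = f.1 i - f.1 (i + 1) := fun i => dOf_apply f.1 f.2.1.2 i
    set M := N + j with hM
    have hsub : d.support ⊆ Finset.range M := by
      intro k hk
      rw [Finsupp.mem_support_iff, hcoe k] at hk
      rw [Finset.mem_range]
      by_contra h
      push_neg at h
      exact hk (by rw [hN k (by omega), hN (k + 1) (by omega)]; omega)
    have h1 : toF d j = ∑ k ∈ Finset.range M, if j ≤ k then f.1 k - f.1 (k + 1) else 0 := by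
      rw [toF, Finset.sum_congr rfl (fun k _ => by rw [hcoe k])]
      apply Finset.sum_subset hsub
      intro k _ hk
      rw [Finsupp.notMem_support_iff, hcoe k] at hk
      rw [hk, ite_self]
    rw [h1, tele f.1 hanti M (by omega), hN M (by omega)]
    omega


lemma prodLimit_mul (r : ℕ) (hr : 0 < r) : prodLimit (GG r) * prodLimit BB = prodLimit (CC r) := by
  classical
  apply MvPowerSeries.ext
  intro e
  rw [coeff_mul]
  have hstep : ∀ p ∈ antidiagonal e,
      coeff p.1 (prodLimit (GG r)) * coeff p.2 (prodLimit BB) =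
        coeff p.1 (∏ j ∈ Finset.range (e 1 + 1), GG r j) *
          coeff p.2 (∏ j ∈ Finset.range (e 1 + 1), BB j) := by
    intro p hp
    have hpe : p.1 + p.2 = e := mem_antidiagonal.mp hp
    have h1 : p.1 1 ≤ e 1 := Finsupp.le_def.mp (hpe ▸ le_add_right le_rfl) 1
    have h2 : p.2 1 ≤ e 1 := Finsupp.le_def.mp (hpe ▸ le_add_self) 1
    rw [coeff_prodLimit, coeff_prodLimit,
      ← coeff_prod_subset (GG r) (tame_GG r hr) p.1 (s := Finset.range (e 1 + 1))
        (Finset.range_subset_range.mpr (by omega)),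
      ← coeff_prod_subset BB tame_BB p.2 (s := Finset.range (e 1 + 1))
        (Finset.range_subset_range.mpr (by omega))]
  rw [Finset.sum_congr rfl hstep, ← coeff_mul, ← Finset.prod_mul_distrib,
    Finset.prod_congr rfl (fun j _ => GG_mul_BB r j), ← coeff_prodLimit]

lemma constantCoeff_prodLimit_BB :
    MvPowerSeries.constantCoeff (prodLimit BB) = 1 := by
  rw [← coeff_zero_eq_constantCoeff_apply, coeff_prodLimit]
  have h0 : ((0 : Fin 2 →₀ ℕ)) 1 = 0 := rfl
  rw [h0, Finset.prod_range_one, BB, map_sub]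
  have : coeff (0 : Fin 2 →₀ ℕ) (uu 0) = 0 := by
    rw [← pow_one (uu 0), coeff_uu_pow]
    norm_num
  rw [this, sub_zero, coeff_one, if_pos rfl]


end Stmt4Aux
end Stmt4AuxSec

open Stmt4Aux

/-- `Σ_{λ an r-kernel} z^{λ_1} T^{|λ|} = (z^r T^r; T^r)_∞ / (zT; T)_∞`. -/
theorem stmt4 (r : ℕ) (hr : 0 < r) :
    (∑' lam : {f : ℕ → ℕ // PartitionFun f ∧ KernelFun r f},
        (X 0 : MvPowerSeries (Fin 2) ℚ) ^ (lam.1 0) * (X 1) ^ psize lam.1) =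
      qPochInf ((X 0 : MvPowerSeries (Fin 2) ℚ) ^ r * (X 1) ^ r) ((X 1) ^ r) *
        (qPochInf ((X 0 : MvPowerSeries (Fin 2) ℚ) * X 1) (X 1))⁻¹ := by
  classical
  have hL : (∑' lam : {f : ℕ → ℕ // PartitionFun f ∧ KernelFun r f},
      (X 0 : MvPowerSeries (Fin 2) ℚ) ^ (lam.1 0) * (X 1) ^ psize lam.1)
      = prodLimit (GG r) := by
    calc (∑' lam : {f : ℕ → ℕ // PartitionFun f ∧ KernelFun r f},
        (X 0 : MvPowerSeries (Fin 2) ℚ) ^ (lam.1 0) * (X 1) ^ psize lam.1)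
        = ∑' d : {d : ℕ →₀ ℕ // ∀ j, d j < r},
            (X 0 : MvPowerSeries (Fin 2) ℚ) ^ ((kerEquiv r hr d).1 0)
              * (X 1) ^ psize (kerEquiv r hr d).1 :=
          (Equiv.tsum_eq (kerEquiv r hr) _).symm
      _ = ∑' d : {d : ℕ →₀ ℕ // ∀ j, d j < r}, wD d.1 := by
          apply tsum_congr
          intro d
          show (X 0 : MvPowerSeries (Fin 2) ℚ) ^ (toF d.1 0) * (X 1) ^ psize (toF d.1)
            = wD d.1
          rw [toF_zero_eq, psize_toF, wD_eq]
      _ = prodLimit (GG r) := (hasSum_wD r hr).tsum_eq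
  have hQ : qPochInf ((X 0 : MvPowerSeries (Fin 2) ℚ) ^ r * (X 1) ^ r) ((X 1) ^ r)
      = prodLimit (CC r) := by
    have h : (∏' j : ℕ, (1 - ((X 0 : MvPowerSeries (Fin 2) ℚ) ^ r * (X 1) ^ r)
        * ((X 1 : MvPowerSeries (Fin 2) ℚ) ^ r) ^ j)) = prodLimit (CC r) := by
      rw [tprod_congr (g := CC r) (fun j => by simp only [CC, uu]; ring)]
      exact tprod_tame _ (tame_CC r hr)
    exact h
  have hP : qPochInf ((X 0 : MvPowerSeries (Fin 2) ℚ) * X 1) (X 1) = prodLimit BB := by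
    have h : (∏' j : ℕ, (1 - ((X 0 : MvPowerSeries (Fin 2) ℚ) * X 1)
        * (X 1 : MvPowerSeries (Fin 2) ℚ) ^ j)) = prodLimit BB := by
      rw [tprod_congr (g := BB) (fun j => by simp only [BB, uu]; ring)]
      exact tprod_tame _ tame_BB
    exact h
  have hPinv : prodLimit BB * (prodLimit BB)⁻¹ = 1 :=
    MvPowerSeries.mul_inv_cancel _ (by
      rw [constantCoeff_prodLimit_BB]; exact one_ne_zero)
  rw [hQ, hP, ← prodLimit_mul r hr, mul_assoc, hPinv, mul_one]
  exact hL
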